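/- Fix m ≥ 1, a strictly increasing sequence t = (t_0, …, t_{m+1}) with t_0 = 0 and t_i ≥ 0, and a vector γ = (γ_0, …, γ_{m+1}) with γ_0, …, γ_m > 0 and γ_{m+1} = 0. Let γ' be the lower convex hull of the points {(t_i, γ_i) : 0 ≤ i ≤ m+1}, with slopes θ_i = (γ'_{i+1} − γ'_i)/(t_{i+1} − t_i), and set q*_i = √(θ_i/θ_0) for 0 ≤ i ≤ m. Then q* ∈ A^{(m)} and q* minimizes R^{(m)}(q; t, γ) = (∑_{i=0}^m q_i(t_{i+1} − t_i))(∑_{i=0}^m (γ_i − γ_{i+1})/q_i) over A^{(m)} = {q ∈ ℝ^{m+1} : 1 = q_0 ≥ q_1 ≥ … ≥ q_m > 0}. -/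

import Mathlib

/-- The slope sequence of `γ'` relative to the abscissae `t`. -/
noncomputable def slopeSeq (t γ' : ℕ → ℝ) : ℕ → ℝ :=
  fun i => (γ' (i + 1) - γ' i) / (t (i + 1) - t i)

/-- The set `A^(m)`: `1 = q_0 ≥ q_1 ≥ ⋯ ≥ q_m > 0`. -/
def memAm (m : ℕ) (q : ℕ → ℝ) : Prop :=
  q 0 = 1 ∧ (∀ i, i < m → q (i + 1) ≤ q i) ∧ ∀ i, i ≤ m → 0 < q i

/-- `R^(m)(q; t, γ) = (∑_{i=0}^m q_i (t_{i+1} - t_i)) (∑_{i=0}^m (γ_i - γ_{i+1})/q_i)`. -/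
noncomputable def Rm (m : ℕ) (q t γ : ℕ → ℝ) : ℝ :=
  (∑ i ∈ Finset.range (m + 1), q i * (t (i + 1) - t i)) *
    ∑ i ∈ Finset.range (m + 1), (γ i - γ (i + 1)) / q i

/-- Abel summation identity for the difference sum. -/
lemma abel_diff (m : ℕ) (e q : ℕ → ℝ) (he0 : e 0 = 0) (hetop : e (m + 1) = 0) :
    ∑ i ∈ Finset.range (m + 1), (e i - e (i + 1)) / q i
      = ∑ i ∈ Finset.range m, e (i + 1) * (1 / q (i + 1) - 1 / q i) := by
  have h1 : ∑ i ∈ Finset.range (m + 1), (e i - e (i + 1)) / q i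
      = ∑ i ∈ Finset.range (m + 1), e i / q i
        - ∑ i ∈ Finset.range (m + 1), e (i + 1) / q i := by
    rw [← Finset.sum_sub_distrib]
    congr 1; funext i; ring
  rw [h1, Finset.sum_range_succ' (fun i => e i / q i) m,
    Finset.sum_range_succ (fun i => e (i + 1) / q i) m, he0, hetop]
  simp only [zero_div, add_zero, zero_add]
  rw [← Finset.sum_sub_distrib]
  congr 1; funext i; ring

theorem stmt_18 (m : ℕ) (hm : 1 ≤ m) (t γ γ' : ℕ → ℝ)
    (ht0 : t 0 = 0) (htmono : ∀ i, i ≤ m → t i < t (i + 1))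
    (htnn : ∀ i, i ≤ m + 1 → 0 ≤ t i)
    (hγpos : ∀ i, i ≤ m → 0 < γ i) (hγtop : γ (m + 1) = 0)
    -- `γ'` is the lower convex hull of the points `(t_i, γ_i)`, `0 ≤ i ≤ m+1`:
    -- the largest vector bounded above by `γ` whose slopes are nondecreasing.
    (hle : ∀ i, i ≤ m + 1 → γ' i ≤ γ i)
    (hslope : ∀ i, i + 1 ≤ m → slopeSeq t γ' i ≤ slopeSeq t γ' (i + 1))
    (hmax : ∀ δ : ℕ → ℝ, (∀ i, i ≤ m + 1 → δ i ≤ γ i) →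
      (∀ i, i + 1 ≤ m → slopeSeq t δ i ≤ slopeSeq t δ (i + 1)) →
      ∀ i, i ≤ m + 1 → δ i ≤ γ' i) :
    memAm m (fun i => Real.sqrt (slopeSeq t γ' i / slopeSeq t γ' 0)) ∧
      ∀ q, memAm m q →
        Rm m (fun i => Real.sqrt (slopeSeq t γ' i / slopeSeq t γ' 0)) t γ ≤
          Rm m q t γ := by
  set θ : ℕ → ℝ := slopeSeq t γ' with hθdef
  have hΔt : ∀ i, i ≤ m → 0 < t (i + 1) - t i := fun i hi => sub_pos.2 (htmono i hi)
  -- strict monotonicity of t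
  have htlt : ∀ i j, i < j → j ≤ m + 1 → t i < t j := by
    intro i j hij hj
    induction j with
    | zero => omega
    | succ n ih =>
      rcases Nat.lt_succ_iff_lt_or_eq.1 hij with h | h
      · exact lt_trans (ih h (by omega)) (htmono n (by omega))
      · subst h; exact htmono i (by omega)
  -- monotonicity of θ
  have hθmono : ∀ i j, i ≤ j → j ≤ m → θ i ≤ θ j := by
    intro i j hij hj
    induction j with
    | zero => have : i = 0 := by omega
              subst this; exact le_rfl
    | succ n ih =>
      rcases Nat.lt_succ_iff_lt_or_eq.1 (Nat.lt_succ_of_le hij) with h | h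
      · exact le_trans (ih (by omega) (by omega)) (hslope n (by omega))
      · subst h; rfl
  -- γ' is positive at m (hence on all of [0,m])
  have hγ'm : 0 < γ' m := by
    set c : ℝ := Finset.inf' (Finset.range (m + 1)) ⟨0, by simp⟩
      (fun i => γ i / (t (m + 1) - t i)) with hc
    have hcpos : 0 < c := by
      rw [hc]; refine (Finset.lt_inf'_iff _).2 ?_
      intro i hi
      rw [Finset.mem_range] at hi
      exact div_pos (hγpos i (by omega)) (sub_pos.2 (htlt i (m + 1) (by omega) le_rfl))
    have hδle : ∀ i, i ≤ m + 1 → c * (t (m + 1) - t i) ≤ γ i := by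
      intro i hi
      rcases Nat.lt_or_ge i (m + 1) with h | h
      · have hcle : c ≤ γ i / (t (m + 1) - t i) :=
          Finset.inf'_le _ (by simp [Finset.mem_range]; omega)
        have hpos : 0 < t (m + 1) - t i := sub_pos.2 (htlt i (m + 1) h le_rfl)
        calc c * (t (m + 1) - t i) ≤ (γ i / (t (m + 1) - t i)) * (t (m + 1) - t i) :=
              mul_le_mul_of_nonneg_right hcle hpos.le
          _ = γ i := div_mul_cancel₀ _ hpos.ne'
      · have : i = m + 1 := by omega
        subst this; simp [hγtop]
    have hδslope : ∀ i, i ≤ m →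
        slopeSeq t (fun j => c * (t (m + 1) - t j)) i = -c := by
      intro i hi
      unfold slopeSeq
      have h := (hΔt i hi).ne'
      field_simp
      ring
    have := hmax (fun j => c * (t (m + 1) - t j)) hδle
      (by intro i hi; rw [hδslope i (by omega), hδslope (i + 1) (by omega)]) m (by omega)
    have : c * (t (m + 1) - t m) ≤ γ' m := this
    calc (0 : ℝ) < c * (t (m + 1) - t m) :=
          mul_pos hcpos (sub_pos.2 (htmono m le_rfl))
      _ ≤ γ' m := this
  -- γ' equals 0 at the top
  have hγ'top : γ' (m + 1) = 0 := by
    refine le_antisymm (by simpa [hγtop] using hle (m + 1) le_rfl) ?_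
    set δ : ℕ → ℝ := Function.update γ' (m + 1) 0 with hδ
    have hδle : ∀ i, i ≤ m + 1 → δ i ≤ γ i := by
      intro i hi
      rcases Nat.lt_or_ge i (m + 1) with h | h
      · rw [hδ, Function.update_of_ne (by omega)]; exact hle i hi
      · have : i = m + 1 := by omega
        subst this; simp [hδ, hγtop]
    have hδslope : ∀ i, i + 1 ≤ m → slopeSeq t δ i ≤ slopeSeq t δ (i + 1) := by
      intro i hi
      rcases Nat.lt_or_ge (i + 1) m with h | h
      · have e1 : slopeSeq t δ i = θ i := by
          unfold slopeSeq
          rw [hδ, Function.update_of_ne (show (i + 1 : ℕ) ≠ m + 1 by omega) (0 : ℝ) γ',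
            Function.update_of_ne (show (i : ℕ) ≠ m + 1 by omega) (0 : ℝ) γ']
          rfl
        have e2 : slopeSeq t δ (i + 1) = θ (i + 1) := by
          unfold slopeSeq
          rw [hδ, Function.update_of_ne (show (i + 1 + 1 : ℕ) ≠ m + 1 by omega) (0 : ℝ) γ',
            Function.update_of_ne (show (i + 1 : ℕ) ≠ m + 1 by omega) (0 : ℝ) γ']
          rfl
        rw [e1, e2]; exact hslope i hi
      · -- i + 1 = m
        have him : i + 1 = m := by omega
        have e1 : slopeSeq t δ i = θ i := by
          unfold slopeSeq
          rw [hδ, Function.update_of_ne (show (i + 1 : ℕ) ≠ m + 1 by omega) (0 : ℝ) γ',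
            Function.update_of_ne (show (i : ℕ) ≠ m + 1 by omega) (0 : ℝ) γ']
          rfl
        have e2 : slopeSeq t δ (i + 1) = (0 - γ' (i + 1)) / (t (i + 1 + 1) - t (i + 1)) := by
          unfold slopeSeq
          rw [hδ, Function.update_of_ne (show (i + 1 : ℕ) ≠ m + 1 by omega) (0 : ℝ) γ',
            show i + 1 + 1 = m + 1 by omega, Function.update_self,
            show m + 1 = i + 1 + 1 by omega]
        have hθle : θ (i + 1) ≤ (0 - γ' (i + 1)) / (t (i + 1 + 1) - t (i + 1)) := by
          have h0 : γ' (i + 1 + 1) ≤ 0 := by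
            rw [show i + 1 + 1 = m + 1 by omega]
            simpa [hγtop] using hle (m + 1) le_rfl
          have hpos := hΔt (i + 1) (by omega)
          have hrepr : θ (i + 1) = (γ' (i + 1 + 1) - γ' (i + 1)) / (t (i + 1 + 1) - t (i + 1)) := rfl
          rw [hrepr]
          exact (div_le_div_iff_of_pos_right hpos).2 (by linarith)
        rw [e1, e2]
        exact le_trans (hslope i hi) hθle
    have := hmax δ hδle hδslope (m + 1) le_rfl
    simpa [hδ] using this
  -- γ' equals γ at 0
  have hγ'0 : γ' 0 = γ 0 := by
    refine le_antisymm (hle 0 (by omega)) ?_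
    set δ : ℕ → ℝ := Function.update γ' 0 (γ 0) with hδ
    have hδle : ∀ i, i ≤ m + 1 → δ i ≤ γ i := by
      intro i hi
      rcases Nat.eq_zero_or_pos i with h | h
      · subst h; simp [hδ]
      · rw [hδ, Function.update_of_ne (by omega)]; exact hle i hi
    have hδslope : ∀ i, i + 1 ≤ m → slopeSeq t δ i ≤ slopeSeq t δ (i + 1) := by
      intro i hi
      have e2 : slopeSeq t δ (i + 1) = θ (i + 1) := by
        unfold slopeSeq
        rw [hδ, Function.update_of_ne (show (i + 1 + 1 : ℕ) ≠ 0 by omega) (γ 0) γ',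
          Function.update_of_ne (show (i + 1 : ℕ) ≠ 0 by omega) (γ 0) γ']
        rfl
      rcases Nat.eq_zero_or_pos i with h | h
      · subst h
        have e1 : slopeSeq t δ 0 = (γ' 1 - γ 0) / (t 1 - t 0) := by
          unfold slopeSeq
          rw [hδ, Function.update_of_ne (show (1 : ℕ) ≠ 0 by omega) (γ 0) γ',
            Function.update_self]
        rw [e1, e2]
        have h01 : (γ' 1 - γ 0) / (t 1 - t 0) ≤ θ 0 := by
          have hle0 := hle 0 (by omega)
          have hrepr : θ 0 = (γ' (0 + 1) - γ' 0) / (t (0 + 1) - t 0) := rfl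
          rw [hrepr]
          exact (div_le_div_iff_of_pos_right (hΔt 0 (by omega))).2 (by linarith)
        exact le_trans h01 (hslope 0 hi)
      · have e1 : slopeSeq t δ i = θ i := by
          unfold slopeSeq
          rw [hδ, Function.update_of_ne (show (i + 1 : ℕ) ≠ 0 by omega) (γ 0) γ',
            Function.update_of_ne (show (i : ℕ) ≠ 0 by omega) (γ 0) γ']
          rfl
        rw [e1, e2]; exact hslope i hi
    have := hmax δ hδle hδslope 0 (by omega)
    simpa [hδ] using this
  -- θ is negative on [0,m]
  have hθneg : ∀ i, i ≤ m → θ i < 0 := by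
    intro i hi
    refine lt_of_le_of_lt (hθmono i m hi le_rfl) ?_
    have : θ m = (γ' (m + 1) - γ' m) / (t (m + 1) - t m) := rfl
    rw [this, hγ'top]
    exact div_neg_of_neg_of_pos (by linarith) (hΔt m le_rfl)
  -- contact: wherever the slope strictly increases, γ' touches γ
  have hcontact : ∀ j, j + 1 ≤ m → θ j < θ (j + 1) → γ' (j + 1) = γ (j + 1) := by
    intro j hj hlt
    by_contra hne
    have hstrict : γ' (j + 1) < γ (j + 1) := lt_of_le_of_ne (hle (j + 1) (by omega)) hne
    set a : ℝ := t (j + 1) - t j with ha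
    set b : ℝ := t (j + 2) - t (j + 1) with hb
    have hapos : 0 < a := hΔt j (by omega)
    have hbpos : 0 < b := hΔt (j + 1) (by omega)
    set vstar : ℝ := (γ' j * b + γ' (j + 2) * a) / (a + b) with hvstar
    have hθj : θ j = (γ' (j + 1) - γ' j) / a := rfl
    have hθj1 : θ (j + 1) = (γ' (j + 2) - γ' (j + 1)) / b := rfl
    have hkey : (γ' (j + 1) - γ' j) * b < (γ' (j + 2) - γ' (j + 1)) * a := by
      have := hlt
      rw [hθj, hθj1, div_lt_div_iff₀ hapos hbpos] at this
      exact this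
    have hvgt : γ' (j + 1) < vstar := by
      rw [hvstar, lt_div_iff₀ (by linarith)]
      nlinarith
    set v : ℝ := min (γ (j + 1)) vstar with hv
    have hvgt' : γ' (j + 1) < v := lt_min hstrict hvgt
    set δ : ℕ → ℝ := Function.update γ' (j + 1) v with hδ
    have hδle : ∀ i, i ≤ m + 1 → δ i ≤ γ i := by
      intro i hi
      rcases eq_or_ne i (j + 1) with h | h
      · subst h; rw [hδ, Function.update_self]; exact min_le_left _ _
      · rw [hδ, Function.update_of_ne h]; exact hle i hi
    have hδslope : ∀ i, i + 1 ≤ m → slopeSeq t δ i ≤ slopeSeq t δ (i + 1) := by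
      intro i hi
      have hsl : ∀ k, k ≠ j + 1 → k + 1 ≠ j + 1 → slopeSeq t δ k = θ k := by
        intro k hk hk1
        unfold slopeSeq
        rw [hδ, Function.update_of_ne hk1 v γ', Function.update_of_ne hk v γ']
        rfl
      have hslj : slopeSeq t δ j = (v - γ' j) / a := by
        unfold slopeSeq
        rw [hδ, Function.update_self,
          Function.update_of_ne (show j ≠ j + 1 by omega) v γ', ha]
      have hslj1 : slopeSeq t δ (j + 1) = (γ' (j + 2) - v) / b := by
        unfold slopeSeq
        rw [hδ, Function.update_of_ne (show (j + 1 + 1 : ℕ) ≠ j + 1 by omega) v γ',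
          Function.update_self, hb]
      rcases eq_or_ne i j with h | h
      · -- slope j ≤ slope (j+1)
        subst h
        rw [hslj, hslj1, div_le_div_iff₀ hapos hbpos]
        have hvle : v ≤ vstar := min_le_right _ _
        rw [hvstar, le_div_iff₀ (by linarith)] at hvle
        nlinarith
      rcases eq_or_ne (i + 1) j with h1 | h1
      · -- slope (j-1) ≤ slope j
        rw [hsl i (by omega) (by omega)]
        have hj1 : slopeSeq t δ (i + 1) = (v - γ' j) / a := by rw [h1]; exact hslj
        rw [hj1]
        have h2 : θ (i + 1) = (γ' (j + 1) - γ' j) / a := by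
          rw [h1]; exact hθj
        have h3 := hslope i hi
        rw [h2] at h3
        exact le_trans h3 ((div_le_div_iff_of_pos_right hapos).2 (by linarith))
      rcases eq_or_ne i (j + 1) with h2 | h2
      · -- slope (j+1) ≤ slope (j+2)
        subst h2
        rw [hslj1, hsl (j + 2) (by omega) (by omega)]
        calc (γ' (j + 2) - v) / b ≤ (γ' (j + 2) - γ' (j + 1)) / b :=
              (div_le_div_iff_of_pos_right hbpos).2 (by linarith)
          _ = θ (j + 1) := rfl
          _ ≤ θ (j + 2) := hslope (j + 1) (by omega)
      · rw [hsl i h2 (by omega), hsl (i + 1) (by omega) (by omega)]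
        exact hslope i hi
    have := hmax δ hδle hδslope (j + 1) (by omega)
    rw [hδ, Function.update_self] at this
    exact absurd this (not_le.2 hvgt')
  -- set up the candidate minimizer
  set c : ℝ := Real.sqrt (-θ 0) with hcdef
  have hcpos : 0 < c := Real.sqrt_pos.2 (by linarith [hθneg 0 (by omega)])
  set qs : ℕ → ℝ := fun i => Real.sqrt (θ i / θ 0) with hqs
  have hqs_eq : ∀ i, qs i = Real.sqrt (-θ i) / c := by
    intro i
    have h0 : (0 : ℝ) ≤ -θ 0 := by linarith [hθneg 0 (by omega)]
    rw [hqs]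
    show Real.sqrt (θ i / θ 0) = Real.sqrt (-θ i) / c
    rw [show θ i / θ 0 = -θ i / -θ 0 from (neg_div_neg_eq _ _).symm,
      Real.sqrt_div' (-θ i) h0, hcdef]
  have hqspos : ∀ i, i ≤ m → 0 < qs i := by
    intro i hi
    rw [hqs_eq]
    exact div_pos (Real.sqrt_pos.2 (by linarith [hθneg i hi])) hcpos
  have hqs0 : qs 0 = 1 := by
    have hd : θ 0 / θ 0 = 1 := div_self (hθneg 0 (by omega)).ne
    rw [hqs]
    show Real.sqrt (θ 0 / θ 0) = 1
    rw [hd, Real.sqrt_one]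
  have hqsmono : ∀ i, i < m → qs (i + 1) ≤ qs i := by
    intro i hi
    rw [hqs_eq, hqs_eq]
    exact (div_le_div_iff_of_pos_right hcpos).2
      (Real.sqrt_le_sqrt (by linarith [hslope i (by omega)]))
  have hmemAm : memAm m qs := ⟨hqs0, hqsmono, hqspos⟩
  -- relation between γ' differences and θ
  have hγ'step : ∀ i, i ≤ m → γ' i - γ' (i + 1) = (-θ i) * (t (i + 1) - t i) := by
    intro i hi
    have h : θ i * (t (i + 1) - t i) = γ' (i + 1) - γ' i := by
      rw [hθdef]
      unfold slopeSeq
      exact div_mul_cancel₀ _ (hΔt i hi).ne'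
    linarith [h]
  -- the s sequence
  set s : ℕ → ℝ := fun i => Real.sqrt (-θ i) * (t (i + 1) - t i) with hs
  have hsnn : ∀ i, 0 ≤ Real.sqrt (-θ i) := fun i => Real.sqrt_nonneg _
  -- key sum comparison via Abel summation
  have habel : ∀ q : ℕ → ℝ,
      ∑ i ∈ Finset.range (m + 1), (γ i - γ (i + 1)) / q i
        - ∑ i ∈ Finset.range (m + 1), (γ' i - γ' (i + 1)) / q i
      = ∑ i ∈ Finset.range m, (γ (i + 1) - γ' (i + 1)) * (1 / q (i + 1) - 1 / q i) := by
    intro q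
    have := abel_diff m (fun i => γ i - γ' i) q (by simp [hγ'0]) (by simp [hγtop, hγ'top])
    rw [← this, ← Finset.sum_sub_distrib]
    congr 1; funext i; ring
  -- inequality for any q ∈ A
  have hsum_le : ∀ q, memAm m q →
      ∑ i ∈ Finset.range (m + 1), (γ' i - γ' (i + 1)) / q i
        ≤ ∑ i ∈ Finset.range (m + 1), (γ i - γ (i + 1)) / q i := by
    intro q hq
    rw [← sub_nonneg, habel q]
    apply Finset.sum_nonneg
    intro i hi
    rw [Finset.mem_range] at hi
    apply mul_nonneg
    · linarith [hle (i + 1) (by omega)]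
    · have h1 : 0 < q (i + 1) := hq.2.2 (i + 1) (by omega)
      have h2 : q (i + 1) ≤ q i := hq.2.1 i hi
      have := one_div_le_one_div_of_le h1 h2
      linarith
  -- equality for qs
  have hsum_eq :
      ∑ i ∈ Finset.range (m + 1), (γ' i - γ' (i + 1)) / qs i
        = ∑ i ∈ Finset.range (m + 1), (γ i - γ (i + 1)) / qs i := by
    have h := habel qs
    have hz : ∑ i ∈ Finset.range m, (γ (i + 1) - γ' (i + 1)) * (1 / qs (i + 1) - 1 / qs i)
        = 0 := by
      apply Finset.sum_eq_zero
      intro i hi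
      rw [Finset.mem_range] at hi
      rcases eq_or_lt_of_le (hslope i (by omega)) with h' | h'
      · have hq : qs (i + 1) = qs i := by
          rw [hqs]
          show Real.sqrt (θ (i + 1) / θ 0) = Real.sqrt (θ i / θ 0)
          rw [← h']
        rw [hq]; ring
      · rw [hcontact i (by omega) h']; ring
    rw [hz] at h
    linarith
  -- Cauchy–Schwarz lower bound
  have hCS : ∀ q : ℕ → ℝ, (∀ i, i ≤ m → 0 < q i) →
      (∑ i ∈ Finset.range (m + 1), s i) ^ 2
        ≤ (∑ i ∈ Finset.range (m + 1), q i * (t (i + 1) - t i)) *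
            ∑ i ∈ Finset.range (m + 1), (γ' i - γ' (i + 1)) / q i := by
    intro q hq
    have key := Finset.sum_mul_sq_le_sq_mul_sq (Finset.range (m + 1))
      (fun i => Real.sqrt (q i * (t (i + 1) - t i)))
      (fun i => Real.sqrt ((γ' i - γ' (i + 1)) / q i))
    have e1 : ∀ i ∈ Finset.range (m + 1),
        Real.sqrt (q i * (t (i + 1) - t i)) * Real.sqrt ((γ' i - γ' (i + 1)) / q i) = s i := by
      intro i hi
      rw [Finset.mem_range] at hi
      have him : i ≤ m := by omega
      rw [← Real.sqrt_mul (mul_nonneg (hq i him).le (hΔt i him).le)]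
      have : q i * (t (i + 1) - t i) * ((γ' i - γ' (i + 1)) / q i)
          = (-θ i) * (t (i + 1) - t i) ^ 2 := by
        rw [hγ'step i him]
        field_simp [(hq i him).ne']
      rw [this, Real.sqrt_mul (by linarith [hθneg i him]),
        Real.sqrt_sq (hΔt i him).le, hs]
    have e2 : ∀ i ∈ Finset.range (m + 1),
        Real.sqrt (q i * (t (i + 1) - t i)) ^ 2 = q i * (t (i + 1) - t i) := by
      intro i hi
      rw [Finset.mem_range] at hi
      exact Real.sq_sqrt (mul_nonneg (hq i (by omega)).le (hΔt i (by omega)).le)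
    have e3 : ∀ i ∈ Finset.range (m + 1),
        Real.sqrt ((γ' i - γ' (i + 1)) / q i) ^ 2 = (γ' i - γ' (i + 1)) / q i := by
      intro i hi
      rw [Finset.mem_range] at hi
      have him : i ≤ m := by omega
      apply Real.sq_sqrt
      rw [hγ'step i him]
      have h1 : (0 : ℝ) ≤ -θ i := by linarith [hθneg i him]
      exact div_nonneg (mul_nonneg h1 (hΔt i him).le) (hq i him).le
    rw [Finset.sum_congr rfl e1, Finset.sum_congr rfl e2, Finset.sum_congr rfl e3] at key
    exact key
  -- exact value at qs
  have hval : (∑ i ∈ Finset.range (m + 1), qs i * (t (i + 1) - t i)) *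
      (∑ i ∈ Finset.range (m + 1), (γ' i - γ' (i + 1)) / qs i)
      = (∑ i ∈ Finset.range (m + 1), s i) ^ 2 := by
    have e1 : ∀ i ∈ Finset.range (m + 1), qs i * (t (i + 1) - t i) = s i / c := by
      intro i hi
      rw [hqs_eq, hs]
      ring
    have e2 : ∀ i ∈ Finset.range (m + 1), (γ' i - γ' (i + 1)) / qs i = s i * c := by
      intro i hi
      rw [Finset.mem_range] at hi
      have him : i ≤ m := by omega
      have hsq : Real.sqrt (-θ i) ^ 2 = -θ i := Real.sq_sqrt (by linarith [hθneg i him])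
      have hsne : Real.sqrt (-θ i) ≠ 0 := (Real.sqrt_pos.2 (by linarith [hθneg i him])).ne'
      rw [hqs_eq, hγ'step i him, hs, ← hsq]
      field_simp
      rw [Real.sqrt_sq (Real.sqrt_nonneg _)]
      ring
    rw [Finset.sum_congr rfl e1, Finset.sum_congr rfl e2, ← Finset.sum_div, ← Finset.sum_mul]
    field_simp
  refine ⟨hmemAm, ?_⟩
  intro q hq
  have hRqs : Rm m qs t γ = (∑ i ∈ Finset.range (m + 1), s i) ^ 2 := by
    unfold Rm
    rw [← hsum_eq]
    exact hval
  have hstep1 : (∑ i ∈ Finset.range (m + 1), s i) ^ 2 ≤ Rm m q t γ' := hCS q hq.2.2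
  have hstep2 : Rm m q t γ' ≤ Rm m q t γ := by
    unfold Rm
    apply mul_le_mul_of_nonneg_left (hsum_le q hq)
    apply Finset.sum_nonneg
    intro i hi
    rw [Finset.mem_range] at hi
    exact mul_nonneg (hq.2.2 i (by omega)).le (hΔt i (by omega)).le
  calc Rm m qs t γ = (∑ i ∈ Finset.range (m + 1), s i) ^ 2 := hRqs
    _ ≤ Rm m q t γ' := hstep1
    _ ≤ Rm m q t γ := hstep2
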